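/- For every integer s ≥ 1 there exists a constant C > 0 such that for all integers n ≥ 1: |Σ_{x=1}^{n} {n/x}·x^s − (1/s − ζ(s+1)/(s+1))·n^{s+1}| ≤ C·n^{s+1/2}. Equivalently, (1/n^{s+1})·Σ_{x=1}^{n} {n/x}·x^s = 1/s − ζ(s+1)/(s+1) + O(n^{−1/2}) as n → ∞. -/

import Mathlib

set_option maxHeartbeats 1000000

open Finset

-- a^(p+1) - b^(p+1) ≤ (p+1)*(a-b)*a^p  for 0 ≤ b ≤ a
lemma pow_sub_pow_le_upper (p : ℕ) {a b : ℝ} (hb : 0 ≤ b) (hab : b ≤ a) :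
    a ^ (p+1) - b ^ (p+1) ≤ (p+1) * (a - b) * a ^ p := by
  have ha : 0 ≤ a := hb.trans hab
  rw [← geom_sum₂_mul]
  have : (∑ i ∈ range (p+1), a ^ i * b ^ (p - i)) ≤ (p+1) * a ^ p := by
    calc (∑ i ∈ range (p+1), a ^ i * b ^ (p - i))
        ≤ ∑ i ∈ range (p+1), a ^ p := by
          apply Finset.sum_le_sum
          intro i hi
          simp only [mem_range] at hi
          calc a ^ i * b ^ (p - i) ≤ a ^ i * a ^ (p - i) :=
                mul_le_mul_of_nonneg_left (pow_le_pow_left₀ hb hab _) (pow_nonneg ha _)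
            _ = a ^ p := by rw [← pow_add]; congr 1; omega
      _ = (p+1) * a ^ p := by simp [mul_comm]
  calc (∑ i ∈ range (p+1), a ^ i * b ^ (p - i)) * (a - b)
      ≤ ((p+1) * a ^ p) * (a - b) := mul_le_mul_of_nonneg_right this (by linarith)
    _ = (p+1) * (a - b) * a ^ p := by ring

lemma pow_sub_pow_ge_lower (p : ℕ) {a b : ℝ} (hb : 0 ≤ b) (hab : b ≤ a) :
    (p+1) * (a - b) * b ^ p ≤ a ^ (p+1) - b ^ (p+1) := by
  have ha : 0 ≤ a := hb.trans hab
  rw [← geom_sum₂_mul]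
  have : ((p:ℝ)+1) * b ^ p ≤ (∑ i ∈ range (p+1), a ^ i * b ^ (p - i)) := by
    calc ((p:ℝ)+1) * b ^ p = ∑ i ∈ range (p+1), b ^ p := by simp [mul_comm]
      _ ≤ ∑ i ∈ range (p+1), a ^ i * b ^ (p - i) := by
          apply Finset.sum_le_sum
          intro i hi
          simp only [mem_range] at hi
          calc b ^ p = b ^ i * b ^ (p - i) := by rw [← pow_add]; congr 1; omega
            _ ≤ a ^ i * b ^ (p - i) :=
                mul_le_mul_of_nonneg_right (pow_le_pow_left₀ hb hab _) (pow_nonneg hb _)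
  calc ((p:ℝ)+1) * (a - b) * b ^ p = (((p:ℝ)+1) * b ^ p) * (a - b) := by ring
    _ ≤ (∑ i ∈ range (p+1), a ^ i * b ^ (p - i)) * (a - b) :=
        mul_le_mul_of_nonneg_right this (by linarith)

-- |Σ_{x=1}^m x^k − m^{k+1}/(k+1)| ≤ m^k
lemma sum_pow_est (k m : ℕ) :
    |(∑ x ∈ Icc 1 m, (x:ℝ) ^ k) - (m:ℝ) ^ (k+1) / (k+1)| ≤ (m:ℝ) ^ k := by
  induction m with
  | zero => simp
  | succ m ih =>
    rw [abs_sub_le_iff] at ih ⊢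
    obtain ⟨ih1, ih2⟩ := ih
    rw [Finset.sum_Icc_succ_top (by omega)]
    have hm : (0:ℝ) ≤ m := Nat.cast_nonneg m
    have hmm : (m:ℝ) ≤ (m:ℝ)+1 := by linarith
    have hu := pow_sub_pow_le_upper k hm hmm
    have hl := pow_sub_pow_ge_lower k hm hmm
    have hkpos : (0:ℝ) < (k:ℝ)+1 := by positivity
    have hmk : (m:ℝ) ^ k ≤ ((m:ℝ)+1) ^ k := pow_le_pow_left₀ hm hmm k
    push_cast
    set S := (∑ x ∈ Icc 1 m, (x:ℝ) ^ k) with hS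
    set D := (k:ℝ)+1 with hD
    have ih1' : S * D ≤ (m:ℝ)^k * D + (m:ℝ)^(k+1) := by
      have h := mul_le_mul_of_nonneg_right ih1 hkpos.le
      rw [sub_mul, div_mul_cancel₀ _ (ne_of_gt hkpos)] at h
      linarith
    have ih2' : (m:ℝ)^(k+1) ≤ S * D + (m:ℝ)^k * D := by
      have h := mul_le_mul_of_nonneg_right ih2 hkpos.le
      rw [sub_mul, div_mul_cancel₀ _ (ne_of_gt hkpos)] at h
      linarith
    have hmk' := mul_le_mul_of_nonneg_right hmk hkpos.le
    constructor
    · have h : S ≤ ((m:ℝ)+1)^(k+1) / D := by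
        rw [le_div_iff₀ hkpos]
        nlinarith [ih1', hl]
      linarith
    · have h : ((m:ℝ)+1)^(k+1) / D ≤ S + 2*((m:ℝ)+1)^k := by
        rw [div_le_iff₀ hkpos]
        nlinarith [ih2', hu, hmk']
      linarith

lemma sum_inv_pow_le (s n : ℕ) (hs : 1 ≤ s) :
    (∑ d ∈ Icc 1 n, 1 / (d:ℝ) ^ s) ≤ 2 * Real.sqrt n := by
  have step : ∀ d ∈ Icc 1 n, 1 / (d:ℝ) ^ s
      ≤ 2 * (Real.sqrt d - Real.sqrt ((d:ℝ)-1)) := by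
    intro d hd
    simp only [mem_Icc] at hd
    have hd1 : (1:ℝ) ≤ (d:ℝ) := by exact_mod_cast hd.1
    have hdpos : (0:ℝ) < d := by linarith
    set a := Real.sqrt d with ha
    set b := Real.sqrt ((d:ℝ)-1) with hb
    have ha2 : a^2 = d := Real.sq_sqrt hdpos.le
    have hb2 : b^2 = (d:ℝ)-1 := Real.sq_sqrt (by linarith)
    have hapos : 0 < a := Real.sqrt_pos.mpr hdpos
    have hbnn : 0 ≤ b := Real.sqrt_nonneg _
    have hba : b ≤ a := Real.sqrt_le_sqrt (by linarith)
    have h1 : 1 / (d:ℝ) ^ s ≤ 1 / (d:ℝ) := by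
      apply one_div_le_one_div_of_le hdpos
      calc (d:ℝ) = (d:ℝ)^1 := (pow_one _).symm
        _ ≤ (d:ℝ)^s := pow_le_pow_right₀ hd1 hs
    have h2 : 1 / (d:ℝ) ≤ 1 / a := by
      apply one_div_le_one_div_of_le hapos
      nlinarith [ha2, hapos]
    have h3 : 1 / a ≤ 2 * (a - b) := by
      rw [div_le_iff₀ hapos]
      nlinarith [sq_nonneg (a - b)]
    linarith
  calc (∑ d ∈ Icc 1 n, 1 / (d:ℝ) ^ s)
      ≤ ∑ d ∈ Icc 1 n, 2 * (Real.sqrt d - Real.sqrt ((d:ℝ)-1)) :=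
        Finset.sum_le_sum step
    _ = 2 * ∑ d ∈ Icc 1 n, (Real.sqrt d - Real.sqrt ((d:ℝ)-1)) := by
        rw [Finset.mul_sum]
    _ = 2 * Real.sqrt n := by
        rw [← Finset.Ico_add_one_right_eq_Icc, Finset.sum_Ico_eq_sum_range]
        have h : ∀ i ∈ range (n+1-1), (Real.sqrt ((1+i:ℕ):ℝ) - Real.sqrt (((1+i:ℕ):ℝ)-1))
            = (fun j : ℕ => Real.sqrt j) (i+1) - (fun j : ℕ => Real.sqrt j) i := by
          intro i _
          simp only []
          congr 2 <;> push_cast <;> ring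
        rw [Finset.sum_congr rfl h, Finset.sum_range_sub (fun j : ℕ => Real.sqrt j)]
        simp



lemma zsummable (s : ℕ) (hs : 1 ≤ s) : Summable (fun d : ℕ => 1 / (d:ℝ) ^ (s+1)) :=
  Real.summable_one_div_nat_pow.mpr (by omega)

lemma zeta_real (s : ℕ) (hs : 1 ≤ s) :
    riemannZeta ((s:ℂ)+1) = ((∑' d : ℕ, 1 / (d:ℝ) ^ (s+1) : ℝ) : ℂ) := by
  have h1 : 1 < Complex.re ((s:ℂ)+1) := by
    simp only [Complex.add_re, Complex.natCast_re, Complex.one_re]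
    have : (1:ℝ) ≤ (s:ℝ) := by exact_mod_cast hs
    linarith
  rw [zeta_eq_tsum_one_div_nat_cpow h1, Complex.ofReal_tsum]
  congr 1
  ext d
  have h2 : ((s:ℂ)+1) = ((s+1 : ℕ) : ℂ) := by push_cast; ring
  rw [h2, Complex.cpow_natCast]
  push_cast
  ring

lemma sum_Icc_eq_range (s n : ℕ) :
    (∑ d ∈ Icc 1 n, 1 / (d:ℝ) ^ (s+1)) = ∑ d ∈ range (n+1), 1 / (d:ℝ) ^ (s+1) := by
  rw [← Finset.Ico_add_one_right_eq_Icc, Finset.sum_Ico_eq_sum_range, Finset.sum_range_succ']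
  simp [add_comm]

lemma tail_bound (s n : ℕ) (hs : 1 ≤ s) (hn : 1 ≤ n) :
    0 ≤ (∑' d : ℕ, 1 / (d:ℝ) ^ (s+1)) - (∑ d ∈ Icc 1 n, 1 / (d:ℝ) ^ (s+1)) ∧
    (∑' d : ℕ, 1 / (d:ℝ) ^ (s+1)) - (∑ d ∈ Icc 1 n, 1 / (d:ℝ) ^ (s+1)) ≤ 1 / n := by
  have hsum := zsummable s hs
  have key : (∑ d ∈ range (n+1), 1 / (d:ℝ) ^ (s+1)) + (∑' d : ℕ, 1 / ((d+(n+1) : ℕ):ℝ) ^ (s+1))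
      = ∑' d : ℕ, 1 / (d:ℝ) ^ (s+1) := Summable.sum_add_tsum_nat_add (n+1) hsum
  rw [sum_Icc_eq_range, ← key]
  have htail_sum : Summable (fun d : ℕ => 1 / ((d+(n+1) : ℕ):ℝ) ^ (s+1)) :=
    ((summable_nat_add_iff (n+1)).mpr hsum)
  have hnonneg : ∀ d : ℕ, 0 ≤ 1 / ((d+(n+1) : ℕ):ℝ) ^ (s+1) := fun d => by positivity
  constructor
  · have : (0:ℝ) ≤ ∑' d : ℕ, 1 / ((d+(n+1) : ℕ):ℝ) ^ (s+1) := tsum_nonneg hnonneg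
    linarith
  · have hle : (∑' d : ℕ, 1 / ((d+(n+1) : ℕ):ℝ) ^ (s+1)) ≤ 1 / n := by
      apply Summable.tsum_le_of_sum_le htail_sum
      intro u
      obtain ⟨m, hm⟩ := u.exists_nat_subset_range
      calc (∑ d ∈ u, 1 / ((d+(n+1) : ℕ):ℝ) ^ (s+1))
          ≤ ∑ d ∈ range m, 1 / ((d+(n+1) : ℕ):ℝ) ^ (s+1) :=
            Finset.sum_le_sum_of_subset_of_nonneg hm (fun d _ _ => hnonneg d)
        _ = ∑ d ∈ Ioc n (n+m), 1 / ((d:ℕ):ℝ) ^ (s+1) := by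
            rw [← Finset.Icc_add_one_left_eq_Ioc, ← Finset.Ico_add_one_right_eq_Icc, Finset.sum_Ico_eq_sum_range]
            apply Finset.sum_congr (by congr 1; omega)
            intro i _
            have h3 : i + (n+1) = n+1+i := by omega
            rw [h3]
        _ ≤ ∑ d ∈ Ioc n (n+m), ((d:ℝ) ^ 2)⁻¹ := by
            apply Finset.sum_le_sum
            intro d hd
            simp only [mem_Ioc] at hd
            rw [one_div]
            have hd1 : (1:ℝ) ≤ (d:ℝ) := by
              have : 1 ≤ d := by omega
              exact_mod_cast this
            exact inv_anti₀ (by positivity) (pow_le_pow_right₀ hd1 (by omega))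
        _ ≤ (n:ℝ)⁻¹ - ((n+m:ℕ):ℝ)⁻¹ := by
            exact_mod_cast sum_Ioc_inv_sq_le_sub (by omega) (by omega)
        _ ≤ 1 / n := by
            rw [one_div]
            have : 0 ≤ (((n+m:ℕ)):ℝ)⁻¹ := by positivity
            linarith
    linarith

lemma mem_aux (n x d : ℕ) :
    (x ∈ Icc 1 n ∧ d ∈ Icc 1 (n / x)) ↔ (1 ≤ x ∧ 1 ≤ d ∧ x * d ≤ n) := by
  simp only [mem_Icc]
  constructor
  · rintro ⟨⟨h1, h2⟩, h3, h4⟩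
    have h5 := (Nat.le_div_iff_mul_le (by omega)).mp h4
    exact ⟨h1, h3, by rw [Nat.mul_comm]; exact h5⟩
  · rintro ⟨h1, h2, h3⟩
    refine ⟨⟨h1, le_trans (Nat.le_mul_of_pos_right x h2) h3⟩, h2,
      (Nat.le_div_iff_mul_le (by omega)).mpr (by rw [Nat.mul_comm]; exact h3)⟩

lemma swap_nat (s n : ℕ) :
    (∑ x ∈ Icc 1 n, (n / x) * x ^ s) = ∑ d ∈ Icc 1 n, ∑ x ∈ Icc 1 (n / d), x ^ s := by
  have h : ∀ x ∈ Icc 1 n, (n / x) * x ^ s = ∑ d ∈ Icc 1 (n / x), x ^ s := by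
    intro x _
    have h2 : (n / x + 1 - 1 : ℕ) = n / x := by simp
    rw [Finset.sum_const, Nat.card_Icc, smul_eq_mul, h2]
  rw [Finset.sum_congr rfl h]
  refine Finset.sum_comm' (fun x d => ?_)
  constructor
  · intro hh
    obtain ⟨a, b, c⟩ := (mem_aux n x d).mp hh
    have h2 := (mem_aux n d x).mpr ⟨b, a, by rwa [Nat.mul_comm]⟩
    exact ⟨h2.2, h2.1⟩
  · intro hh
    obtain ⟨a, b, c⟩ := (mem_aux n d x).mp ⟨hh.2, hh.1⟩
    exact (mem_aux n x d).mpr ⟨b, a, by rwa [Nat.mul_comm]⟩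

lemma fract_eq (n x : ℕ) (hx : 1 ≤ x) :
    Int.fract ((n:ℝ) / x) = (n:ℝ) / x - ((n / x : ℕ) : ℝ) := by
  rw [Int.fract]
  congr 1
  have hnn : (0:ℝ) ≤ (n:ℝ) / x := by positivity
  rw [← Int.natCast_floor_eq_floor hnn, Nat.floor_div_natCast, Nat.floor_natCast]
  norm_cast

lemma main_real (s : ℕ) (hs : 1 ≤ s) (n : ℕ) (hn : 1 ≤ n) :
    |(∑ x ∈ Icc 1 n, Int.fract ((n:ℝ)/x) * (x:ℝ)^s)
      - (1/(s:ℝ) - (∑' d : ℕ, 1/(d:ℝ)^(s+1))/((s:ℝ)+1)) * (n:ℝ)^(s+1)|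
    ≤ 6 * (n:ℝ)^s * Real.sqrt n := by
  have hN : (1:ℝ) ≤ (n:ℝ) := by exact_mod_cast hn
  have hN0 : (0:ℝ) < n := by linarith
  have hs1 : (1:ℝ) ≤ (s:ℝ) := by exact_mod_cast hs
  have hsR : (0:ℝ) < s := by linarith
  set N := (n:ℝ) with hNdef
  set z := (∑' d : ℕ, 1/(d:ℝ)^(s+1)) with hz
  set P := (∑ d ∈ Icc 1 n, 1/(d:ℝ)^(s+1)) with hP
  set A := (∑ x ∈ Icc 1 n, (x:ℝ)^(s-1)) with hA
  set T := (∑ d ∈ Icc 1 n, ∑ x ∈ Icc 1 (n/d), (x:ℝ)^s) with hT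
  -- Step 1 : decomposition
  have hsplit : (∑ x ∈ Icc 1 n, Int.fract ((n:ℝ)/x) * (x:ℝ)^s) = N * A - T := by
    have e1 : ∀ x ∈ Icc 1 n, Int.fract ((n:ℝ)/x) * (x:ℝ)^s
        = N * (x:ℝ)^(s-1) - ((n/x : ℕ):ℝ) * (x:ℝ)^s := by
      intro x hx
      simp only [mem_Icc] at hx
      have hx0 : ((x:ℝ)) ≠ 0 := by
        have : (1:ℝ) ≤ (x:ℝ) := by exact_mod_cast hx.1
        linarith
      rw [fract_eq n x hx.1, sub_mul]
      congr 1
      have hps : (x:ℝ)^s = (x:ℝ)^(s-1) * (x:ℝ) := by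
        rw [← pow_succ]
        congr 1
        omega
      rw [hps]
      field_simp
      ring
    rw [Finset.sum_congr rfl e1, Finset.sum_sub_distrib, ← Finset.mul_sum]
    congr 1
    have e2 : (∑ x ∈ Icc 1 n, ((n/x : ℕ):ℝ) * (x:ℝ)^s)
        = (((∑ x ∈ Icc 1 n, (n / x) * x ^ s : ℕ)):ℝ) := by push_cast; ring
    rw [e2, swap_nat s n]
    push_cast
    ring
  -- Step 2: first piece
  have h1 : |N * A - N^(s+1)/s| ≤ N^s := by
    have key := sum_pow_est (s-1) n
    have hp : (s-1)+1 = s := by omega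
    have hc : ((s-1:ℕ):ℝ) + 1 = (s:ℝ) := by
      rw [Nat.cast_sub hs]
      push_cast
      ring
    rw [hp, hc] at key
    have e : N * A - N^(s+1)/(s:ℝ) = N * (A - N^s/(s:ℝ)) := by
      rw [pow_succ]
      ring
    rw [e, abs_mul, abs_of_pos hN0]
    calc N * |A - N^s/(s:ℝ)| ≤ N * N^(s-1) :=
          mul_le_mul_of_nonneg_left key hN0.le
      _ = N^((s-1)+1) := by rw [pow_succ]; ring
      _ = N^s := by rw [hp]
  -- Step 3: per-d bound
  have h2 : ∀ d ∈ Icc 1 n,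
      |(∑ x ∈ Icc 1 (n/d), (x:ℝ)^s) - (N/(d:ℝ))^(s+1)/((s:ℝ)+1)|
        ≤ 2 * (N^s * (1/(d:ℝ)^s)) := by
    intro d hd
    simp only [mem_Icc] at hd
    have hd1 : (1:ℝ) ≤ (d:ℝ) := by exact_mod_cast hd.1
    have hd0 : (0:ℝ) < (d:ℝ) := by linarith
    set m := n / d with hm
    have hba : ((m:ℕ):ℝ) ≤ N / (d:ℝ) := Nat.cast_div_le
    have hmnn : (0:ℝ) ≤ (m:ℝ) := Nat.cast_nonneg m
    have hgap : N / (d:ℝ) ≤ (m:ℝ) + 1 := by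
      rw [div_le_iff₀ hd0]
      have hnat : n < (m + 1) * d := (Nat.div_lt_iff_lt_mul (by omega)).mp (Nat.lt_succ_self m)
      have : (n:ℝ) < ((m:ℝ) + 1) * (d:ℝ) := by exact_mod_cast hnat
      linarith
    have hann : (0:ℝ) ≤ N / (d:ℝ) := by positivity
    have key := sum_pow_est s m
    have hsp1 : (0:ℝ) < (s:ℝ) + 1 := by linarith
    -- |m^{s+1}/(s+1) − (N/d)^{s+1}/(s+1)| ≤ (N/d)^s
    have hdif : (N/(d:ℝ))^(s+1)/((s:ℝ)+1) - ((m:ℝ))^(s+1)/((s:ℝ)+1) ≤ (N/(d:ℝ))^s := by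
      have hu := pow_sub_pow_le_upper s hmnn hba
      rw [div_sub_div_same, div_le_iff₀ hsp1]
      nlinarith [hu, hgap, pow_nonneg hann s,
        mul_le_mul_of_nonneg_right (by linarith : N/(d:ℝ) - (m:ℝ) ≤ 1)
          (by positivity : (0:ℝ) ≤ ((s:ℝ)+1) * (N/(d:ℝ))^s)]
    have hdif2 : (0:ℝ) ≤ (N/(d:ℝ))^(s+1)/((s:ℝ)+1) - ((m:ℝ))^(s+1)/((s:ℝ)+1) := by
      apply sub_nonneg.mpr
      gcongr
    have hms : ((m:ℝ))^s ≤ (N/(d:ℝ))^s := pow_le_pow_left₀ hmnn hba s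
    rw [abs_sub_le_iff] at key ⊢
    constructor
    · calc (∑ x ∈ Icc 1 (n/d), (x:ℝ)^s) - (N/(d:ℝ))^(s+1)/((s:ℝ)+1)
          ≤ (∑ x ∈ Icc 1 (n/d), (x:ℝ)^s) - ((m:ℝ))^(s+1)/((s:ℝ)+1) := by
            have h9 : ((s:ℕ):ℝ) + 1 = (s:ℝ) + 1 := by norm_num
            rw [← h9] at hdif2 ⊢
            linarith
        _ ≤ ((m:ℝ))^s := by
            have h9 : ((s:ℕ):ℝ) + 1 = (s:ℝ) + 1 := by norm_num
            rw [h9] at key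
            exact key.1
        _ ≤ (N/(d:ℝ))^s := hms
        _ ≤ 2 * (N^s * (1/(d:ℝ)^s)) := by
            rw [div_pow N, ← mul_one_div]
            have hpos : (0:ℝ) ≤ N^s * (1/(d:ℝ)^s) := by positivity
            linarith
    · calc (N/(d:ℝ))^(s+1)/((s:ℝ)+1) - (∑ x ∈ Icc 1 (n/d), (x:ℝ)^s)
          ≤ ((m:ℝ))^(s+1)/((s:ℝ)+1) + (N/(d:ℝ))^s - (∑ x ∈ Icc 1 (n/d), (x:ℝ)^s) := by
            linarith
        _ ≤ (N/(d:ℝ))^s + ((m:ℝ))^s := by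
            have h9 : ((s:ℕ):ℝ) + 1 = (s:ℝ) + 1 := by norm_num
            rw [h9] at key
            linarith [key.2]
        _ ≤ 2 * (N^s * (1/(d:ℝ)^s)) := by
            have e : (N/(d:ℝ))^s = N^s * (1/(d:ℝ)^s) := by
              rw [div_pow, mul_one_div]
            rw [e] at hms ⊢
            linarith
  -- Step 4: sum over d
  have h3 : |T - N^(s+1) * P / ((s:ℝ)+1)| ≤ 4 * N^s * Real.sqrt n := by
    have e : T - N^(s+1)*P/((s:ℝ)+1)
        = ∑ d ∈ Icc 1 n, ((∑ x ∈ Icc 1 (n/d), (x:ℝ)^s) - (N/(d:ℝ))^(s+1)/((s:ℝ)+1)) := by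
      rw [Finset.sum_sub_distrib]
      congr 1
      rw [hP, ← Finset.sum_div, Finset.mul_sum]
      congr 1
      apply Finset.sum_congr rfl
      intro d _
      rw [div_pow, mul_one_div]
    rw [e]
    calc |∑ d ∈ Icc 1 n, ((∑ x ∈ Icc 1 (n/d), (x:ℝ)^s) - (N/(d:ℝ))^(s+1)/((s:ℝ)+1))|
        ≤ ∑ d ∈ Icc 1 n, |(∑ x ∈ Icc 1 (n/d), (x:ℝ)^s) - (N/(d:ℝ))^(s+1)/((s:ℝ)+1)| :=
          Finset.abs_sum_le_sum_abs _ _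
      _ ≤ ∑ d ∈ Icc 1 n, 2 * (N^s * (1/(d:ℝ)^s)) := Finset.sum_le_sum h2
      _ = 2 * N^s * (∑ d ∈ Icc 1 n, 1/(d:ℝ)^s) := by
          rw [Finset.mul_sum]
          apply Finset.sum_congr rfl
          intro d _
          ring
      _ ≤ 2 * N^s * (2 * Real.sqrt n) := by
          apply mul_le_mul_of_nonneg_left (sum_inv_pow_le s n hs) (by positivity)
      _ = 4 * N^s * Real.sqrt n := by ring
  -- Step 5: tail
  have h4 : |N^(s+1)/((s:ℝ)+1) * (z - P)| ≤ N^s := by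
    obtain ⟨ht1, ht2⟩ := tail_bound s n hs hn
    rw [abs_mul, abs_of_pos (by positivity), abs_of_nonneg ht1]
    have e2 : N^(s+1) * (1/N) = N^s := by
      rw [pow_succ]
      field_simp
    calc (N^(s+1)/((s:ℝ)+1)) * (z-P) ≤ (N^(s+1)/((s:ℝ)+1)) * (1/N) :=
          mul_le_mul_of_nonneg_left ht2 (by positivity)
      _ ≤ N^(s+1) * (1/N) :=
          mul_le_mul_of_nonneg_right (div_le_self (by positivity) (by linarith)) (by positivity)
      _ = N^s := e2
  -- Step 6: combine
  have decomp : (∑ x ∈ Icc 1 n, Int.fract ((n:ℝ)/x) * (x:ℝ)^s)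
      - (1/(s:ℝ) - z/((s:ℝ)+1)) * N^(s+1)
      = (N*A - N^(s+1)/(s:ℝ)) - (T - N^(s+1)*P/((s:ℝ)+1)) + (N^(s+1)/((s:ℝ)+1))*(z-P) := by
    rw [hsplit]
    field_simp
    ring
  rw [decomp]
  have hsq : 1 ≤ Real.sqrt N := by
    rw [show (1:ℝ) = Real.sqrt 1 by simp]
    exact Real.sqrt_le_sqrt hN
  have habs : |(N*A - N^(s+1)/(s:ℝ)) - (T - N^(s+1)*P/((s:ℝ)+1)) + (N^(s+1)/((s:ℝ)+1))*(z-P)|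
      ≤ N^s + (4 * N^s * Real.sqrt n) + N^s := by
    calc |(N*A - N^(s+1)/(s:ℝ)) - (T - N^(s+1)*P/((s:ℝ)+1)) + (N^(s+1)/((s:ℝ)+1))*(z-P)|
        ≤ |(N*A - N^(s+1)/(s:ℝ)) - (T - N^(s+1)*P/((s:ℝ)+1))| + |(N^(s+1)/((s:ℝ)+1))*(z-P)| :=
          abs_add_le _ _
      _ ≤ (|N*A - N^(s+1)/(s:ℝ)| + |T - N^(s+1)*P/((s:ℝ)+1)|) + |(N^(s+1)/((s:ℝ)+1))*(z-P)| := by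
          have := abs_sub (N*A - N^(s+1)/(s:ℝ)) (T - N^(s+1)*P/((s:ℝ)+1))
          linarith [abs_sub_abs_le_abs_sub (N*A - N^(s+1)/(s:ℝ)) (T - N^(s+1)*P/((s:ℝ)+1)),
            abs_sub (N*A - N^(s+1)/(s:ℝ)) (T - N^(s+1)*P/((s:ℝ)+1))]
      _ ≤ N^s + (4 * N^s * Real.sqrt n) + N^s := by
          have := h1
          have := h3
          have := h4
          linarith
  have hpow : (0:ℝ) ≤ N^s := by positivity
  have hfin : N^s + (4 * N^s * Real.sqrt n) + N^s ≤ 6 * N^s * Real.sqrt n := by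
    nlinarith [mul_le_mul_of_nonneg_left hsq hpow]
  linarith

theorem sum_fract_mul_pow_asymptotic (s : ℕ) (hs : 1 ≤ s) :
    ∃ C : ℝ, 0 < C ∧ ∀ n : ℕ, 1 ≤ n →
      ‖((∑ x ∈ Finset.Icc 1 n,
            Int.fract ((n : ℝ) / x) * (x : ℝ) ^ s : ℝ) : ℂ) -
          (1 / (s : ℂ) - riemannZeta ((s : ℂ) + 1) / ((s : ℂ) + 1)) *
            (((n : ℝ) ^ (s + 1) : ℝ) : ℂ)‖ ≤
        C * (n : ℝ) ^ ((s : ℝ) + 1 / 2) := by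
  refine ⟨6, by norm_num, fun n hn => ?_⟩
  have hN0 : (0:ℝ) < n := by exact_mod_cast hn
  set z := (∑' d : ℕ, 1/(d:ℝ)^(s+1)) with hz
  have hcx : (((∑ x ∈ Finset.Icc 1 n, Int.fract ((n : ℝ) / x) * (x : ℝ) ^ s : ℝ)) : ℂ) -
      (1 / (s : ℂ) - riemannZeta ((s : ℂ) + 1) / ((s : ℂ) + 1)) * (((n : ℝ) ^ (s + 1) : ℝ) : ℂ)
      = ((((∑ x ∈ Finset.Icc 1 n, Int.fract ((n : ℝ) / x) * (x : ℝ) ^ s)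
          - (1/(s:ℝ) - z/((s:ℝ)+1)) * (n:ℝ)^(s+1) : ℝ)) : ℂ) := by
    rw [zeta_real s hs, ← hz]
    push_cast
    ring
  rw [hcx, Complex.norm_real, Real.norm_eq_abs]
  have hrpow : (n:ℝ) ^ ((s:ℝ) + 1/2) = (n:ℝ)^s * Real.sqrt n := by
    rw [Real.rpow_add hN0, Real.rpow_natCast, ← Real.sqrt_eq_rpow]
  rw [hrpow]
  have := main_real s hs n hn
  calc |(∑ x ∈ Finset.Icc 1 n, Int.fract ((n : ℝ) / x) * (x : ℝ) ^ s)
        - (1/(s:ℝ) - z/((s:ℝ)+1)) * (n:ℝ)^(s+1)|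
      ≤ 6 * (n:ℝ)^s * Real.sqrt n := this
    _ = 6 * ((n:ℝ)^s * Real.sqrt n) := by ring
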